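/- Let A ≥ 0 be real, let k ∈ ℕ with k > A, and let C ≥ 0. Suppose h : ℝ → ℂ is k-times continuously differentiable on the interval (0,1] (in the sense of `ContDiffOn` with derivatives within (0,1]) and that ‖h^{(k)}(ε)‖ ≤ C·ε^{−A} for every ε ∈ (0,1], where h^{(k)} denotes the k-th derivative within (0,1]. Then the limit of h(ε) as ε → 0⁺ (along (0,1]) exists. -/

import Mathlib

open Filter MeasureTheory Set intervalIntegral

-- FTC on [x,1] for a function differentiable within Ioc 0 1 with continuous derivative
lemma ftc_aux (g g' : ℝ → ℂ)
    (hg : ∀ x ∈ Set.Ioc (0:ℝ) 1, HasDerivWithinAt g (g' x) (Set.Ioc 0 1) x)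
    (hc : ContinuousOn g' (Set.Ioc 0 1))
    {x : ℝ} (hx : x ∈ Set.Ioc (0:ℝ) 1) :
    ∫ t in x..1, g' t = g 1 - g x := by
  have hsub : Set.Icc x 1 ⊆ Set.Ioc 0 1 := fun t ht => ⟨lt_of_lt_of_le hx.1 ht.1, ht.2⟩
  apply intervalIntegral.integral_eq_sub_of_hasDeriv_right_of_le hx.2
  · exact (fun t ht => ((hg t (hsub ht)).differentiableWithinAt.mono hsub).continuousWithinAt)
  · intro t ht
    have ht' : Set.Ioc (0:ℝ) 1 ∈ nhds t :=
      Ioc_mem_nhds (lt_of_lt_of_le hx.1 ht.1.le) ht.2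
    exact ((hg t ⟨lt_of_lt_of_le hx.1 ht.1.le, ht.2.le⟩).hasDerivAt ht').hasDerivWithinAt
  · exact (hc.mono hsub).intervalIntegrable_of_Icc hx.2

lemma step_gt (B C : ℝ) (hB : 1 < B) (hC : 0 ≤ C) (g g' : ℝ → ℂ)
    (hg : ∀ x ∈ Set.Ioc (0:ℝ) 1, HasDerivWithinAt g (g' x) (Set.Ioc 0 1) x)
    (hc : ContinuousOn g' (Set.Ioc 0 1))
    (hbd : ∀ x ∈ Set.Ioc (0:ℝ) 1, ‖g' x‖ ≤ C * x ^ (-B)) :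
    ∀ x ∈ Set.Ioc (0:ℝ) 1, ‖g x‖ ≤ (‖g 1‖ + C / (B - 1)) * x ^ (-(B - 1)) := by
  intro x hx
  have hxpos : 0 < x := hx.1
  have hsub : Set.Icc x 1 ⊆ Set.Ioc 0 1 := fun t ht => ⟨lt_of_lt_of_le hxpos ht.1, ht.2⟩
  have hftc := ftc_aux g g' hg hc hx
  have hxr : (1:ℝ) ≤ x ^ (1 - B) :=
    Real.one_le_rpow_of_pos_of_le_one_of_nonpos hxpos hx.2 (by linarith)
  have hint_bound : IntervalIntegrable (fun t => C * t ^ (-B)) volume x 1 := by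
    apply ContinuousOn.intervalIntegrable_of_Icc hx.2
    exact continuousOn_const.mul (fun t ht => (Real.continuousAt_rpow_const t (-B)
      (Or.inl (ne_of_gt (lt_of_lt_of_le hxpos ht.1)))).continuousWithinAt)
  have hval : (∫ t in x..1, C * t ^ (-B)) = C * (x ^ (1 - B) - 1) / (B - 1) := by
    rw [intervalIntegral.integral_const_mul, integral_rpow (Or.inr ⟨by intro habs; linarith,
      by intro h0; rw [Set.uIcc_of_le hx.2] at h0; exact absurd h0.1 (not_le.mpr hxpos)⟩)]
    rw [Real.one_rpow]
    have he : -B + 1 = 1 - B := by ring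
    rw [he]
    have h1 : B - 1 ≠ 0 := by linarith
    have h2 : (1:ℝ) - B ≠ 0 := by linarith
    field_simp
    ring
  have hvn : (0:ℝ) ≤ C * (x ^ (1 - B) - 1) / (B - 1) := by
    apply div_nonneg _ (by linarith)
    nlinarith
  have hnorm : ‖∫ t in x..1, g' t‖ ≤ C * (x ^ (1 - B) - 1) / (B - 1) := by
    have := intervalIntegral.norm_integral_le_abs_of_norm_le (μ := volume) (f := g')
      (a := x) (b := 1) (g := fun t => C * t ^ (-B)) ?_ hint_bound
    · rwa [hval, abs_of_nonneg hvn] at this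
    · filter_upwards [MeasureTheory.ae_restrict_mem measurableSet_Ioc] with t ht
      exact hbd t (hsub (Set.Ioc_subset_Icc_self ((Set.uIoc_of_le hx.2) ▸ ht)))
  have hg1 : ‖g x‖ ≤ ‖g 1‖ + C * (x ^ (1 - B) - 1) / (B - 1) := by
    have hrw : g x = g 1 - ∫ t in x..1, g' t := by rw [hftc]; ring
    rw [hrw]
    calc ‖g 1 - ∫ t in x..1, g' t‖ ≤ ‖g 1‖ + ‖∫ t in x..1, g' t‖ := norm_sub_le _ _
      _ ≤ _ := by linarith
  have key : C * (x ^ (1 - B) - 1) / (B - 1) ≤ C / (B - 1) * x ^ (1 - B) := by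
    rw [div_le_iff₀ (by linarith : (0:ℝ) < B - 1)] at *
    have : C / (B - 1) * x ^ (1 - B) * (B - 1) = C * x ^ (1 - B) := by
      have h1 : B - 1 ≠ 0 := by linarith
      field_simp
    rw [this]
    nlinarith
  calc ‖g x‖ ≤ ‖g 1‖ + C / (B - 1) * x ^ (1 - B) := by linarith
    _ ≤ ‖g 1‖ * x ^ (1 - B) + C / (B - 1) * x ^ (1 - B) := by
        nlinarith [norm_nonneg (g 1)]
    _ = (‖g 1‖ + C / (B - 1)) * x ^ (-(B - 1)) := by rw [neg_sub]; ring

lemma step_lt (B C : ℝ) (hB0 : 0 ≤ B) (hB : B < 1) (hC : 0 ≤ C) (g g' : ℝ → ℂ)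
    (hg : ∀ x ∈ Set.Ioc (0:ℝ) 1, HasDerivWithinAt g (g' x) (Set.Ioc 0 1) x)
    (hc : ContinuousOn g' (Set.Ioc 0 1))
    (hbd : ∀ x ∈ Set.Ioc (0:ℝ) 1, ‖g' x‖ ≤ C * x ^ (-B)) :
    ∃ L : ℂ, Tendsto g (nhdsWithin 0 (Set.Ioc 0 1)) (nhds L) := by
  -- integrability of g' on (0,1]
  have hmeas : AEStronglyMeasurable g' (volume.restrict (Set.Ioc (0:ℝ) 1)) :=
    hc.aestronglyMeasurable measurableSet_Ioc
  have hbound_int : IntegrableOn (fun t => C * t ^ (-B)) (Set.Ioc (0:ℝ) 1) volume := by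
    have : IntervalIntegrable (fun t => C * t ^ (-B)) volume 0 1 :=
      (intervalIntegrable_rpow' (by linarith)).const_mul C
    rwa [intervalIntegrable_iff_integrableOn_Ioc_of_le (by norm_num : (0:ℝ) ≤ 1)] at this
  have hint : IntegrableOn g' (Set.Ioc (0:ℝ) 1) volume := by
    apply MeasureTheory.Integrable.mono' hbound_int hmeas
    filter_upwards [MeasureTheory.ae_restrict_mem measurableSet_Ioc] with t ht
    exact hbd t ht
  have hint_Icc : IntegrableOn g' (Set.Icc (0:ℝ) 1) volume :=
    (integrableOn_Icc_iff_integrableOn_Ioc).mpr hint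
  -- primitive
  set F : ℝ → ℂ := fun x => ∫ t in Set.Ioc 0 x, g' t with hF
  have hFcont : ContinuousOn F (Set.Icc 0 1) :=
    intervalIntegral.continuousOn_primitive hint_Icc
  -- identity g x = g 1 - F 1 + F x on Ioc 0 1
  have hid : ∀ x ∈ Set.Ioc (0:ℝ) 1, g x = g 1 - F 1 + F x := by
    intro x hx
    have hftc := ftc_aux g g' hg hc hx
    have hsplit : F 1 = F x + ∫ t in Set.Ioc x 1, g' t := by
      rw [hF]
      simp only
      rw [← MeasureTheory.setIntegral_union (Set.Ioc_disjoint_Ioc_of_le le_rfl) measurableSet_Ioc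
        (hint.mono_set (Set.Ioc_subset_Ioc_right hx.2)) (hint.mono_set
          (Set.Ioc_subset_Ioc_left hx.1.le)),
        Set.Ioc_union_Ioc_eq_Ioc hx.1.le hx.2]
    have hIoc : (∫ t in Set.Ioc x 1, g' t) = ∫ t in x..1, g' t :=
      (intervalIntegral.integral_of_le hx.2).symm
    rw [hsplit, hIoc, hftc]
    ring
  refine ⟨g 1 - F 1 + F 0, ?_⟩
  have hF0 : Tendsto F (nhdsWithin 0 (Set.Ioc 0 1)) (nhds (F 0)) := by
    have h0 : (0:ℝ) ∈ Set.Icc (0:ℝ) 1 := by norm_num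
    exact (hFcont 0 h0).mono_left (nhdsWithin_mono 0 Set.Ioc_subset_Icc_self)
  have : Tendsto (fun x => g 1 - F 1 + F x) (nhdsWithin 0 (Set.Ioc 0 1))
      (nhds (g 1 - F 1 + F 0)) := tendsto_const_nhds.add hF0
  apply this.congr'
  filter_upwards [self_mem_nhdsWithin] with x hx
  exact (hid x hx).symm

/-- Newton–Leibniz step: if the `k`-th derivative of `h` on `(0,1]` is bounded by
`C ε^{-A}` with `k > A`, then `h` has a limit as `ε → 0⁺`. -/
theorem limit_exists_of_high_deriv_power_bound
    (A : ℝ) (hA : 0 ≤ A) (k : ℕ) (hk : A < (k : ℝ)) (C : ℝ) (hC : 0 ≤ C)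
    (h : ℝ → ℂ)
    (hsmooth : ContDiffOn ℝ (k : ℕ∞) h (Set.Ioc 0 1))
    (hbound : ∀ ε ∈ Set.Ioc (0:ℝ) 1,
      ‖iteratedDerivWithin k h (Set.Ioc 0 1) ε‖ ≤ C * ε ^ (-A)) :
    ∃ L : ℂ, Tendsto h (nhdsWithin 0 (Set.Ioc 0 1)) (nhds L) := by
  have hud : UniqueDiffOn ℝ (Set.Ioc (0:ℝ) 1) := uniqueDiffOn_Ioc 0 1
  -- main induction
  have Q : ∀ m : ℕ, 1 ≤ m → ∀ B C : ℝ, (m:ℝ) - 1/2 ≤ B → B < m → 0 ≤ C →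
      ContDiffOn ℝ (m:ℕ∞) h (Set.Ioc 0 1) →
      (∀ ε ∈ Set.Ioc (0:ℝ) 1, ‖iteratedDerivWithin m h (Set.Ioc 0 1) ε‖ ≤ C * ε ^ (-B)) →
      ∃ L : ℂ, Tendsto h (nhdsWithin 0 (Set.Ioc 0 1)) (nhds L) := by
    intro m hm
    induction m, hm using Nat.le_induction with
    | base =>
      intro B C hBlo hBhi hC hsm hbd
      have hc : ContinuousOn (iteratedDerivWithin 1 h (Set.Ioc 0 1)) (Set.Ioc 0 1) :=
        hsm.continuousOn_iteratedDerivWithin (by exact_mod_cast le_refl (1:ℕ∞)) hud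
      have hg : ∀ x ∈ Set.Ioc (0:ℝ) 1,
          HasDerivWithinAt h (iteratedDerivWithin 1 h (Set.Ioc 0 1) x) (Set.Ioc 0 1) x := by
        intro x hx
        have hd : DifferentiableOn ℝ h (Set.Ioc 0 1) :=
          hsm.differentiableOn (by simp)
        have := (hd x hx).hasDerivWithinAt
        rwa [← iteratedDerivWithin_one] at this
      exact step_lt B C (by push_cast at hBlo ⊢; linarith) (by exact_mod_cast hBhi) hC h
        (iteratedDerivWithin 1 h (Set.Ioc 0 1)) hg hc hbd
    | succ m hm IH =>
      intro B C hBlo hBhi hC hsm hbd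
      set g := iteratedDerivWithin m h (Set.Ioc 0 1) with hgdef
      set g' := iteratedDerivWithin (m+1) h (Set.Ioc 0 1) with hg'def
      have hmR : (1:ℝ) ≤ (m:ℝ) := by exact_mod_cast hm
      have hB1 : 1 < B := by push_cast at hBlo; linarith
      have hc : ContinuousOn g' (Set.Ioc 0 1) :=
        hsm.continuousOn_iteratedDerivWithin (by exact_mod_cast le_refl ((m+1 : ℕ):ℕ∞)) hud
      have hg : ∀ x ∈ Set.Ioc (0:ℝ) 1, HasDerivWithinAt g (g' x) (Set.Ioc 0 1) x := by
        intro x hx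
        have hd : DifferentiableOn ℝ g (Set.Ioc 0 1) :=
          hsm.differentiableOn_iteratedDerivWithin (by exact_mod_cast Nat.lt_succ_self m) hud
        have := (hd x hx).hasDerivWithinAt
        rwa [← iteratedDerivWithin_succ] at this
      have hbd' := step_gt B C hB1 hC g g' hg hc hbd
      have hC' : 0 ≤ ‖g 1‖ + C / (B - 1) :=
        add_nonneg (norm_nonneg _) (div_nonneg hC (by linarith))
      exact IH (B - 1) (‖g 1‖ + C / (B - 1)) (by push_cast at hBlo ⊢; linarith)
        (by push_cast at hBhi ⊢; linarith) hC'
        (hsm.of_le (by exact_mod_cast Nat.le_succ m)) hbd'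
  -- apply with A* = max A (k - 1/2)
  have hk1 : 1 ≤ k := Nat.one_le_iff_ne_zero.mpr (by
    rintro rfl; simp at hk; linarith)
  set A' := max A ((k:ℝ) - 1/2) with hA'
  have hkR : (1:ℝ) ≤ (k:ℝ) := by exact_mod_cast hk1
  refine Q k hk1 A' C (le_max_right _ _) (max_lt hk (by linarith)) hC hsmooth ?_
  intro ε hε
  calc ‖iteratedDerivWithin k h (Set.Ioc 0 1) ε‖ ≤ C * ε ^ (-A) := hbound ε hε
    _ ≤ C * ε ^ (-A') := by
        apply mul_le_mul_of_nonneg_left _ hC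
        exact Real.rpow_le_rpow_of_exponent_ge hε.1 hε.2 (neg_le_neg (le_max_left _ _))
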